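/- Let m ≥ 1 and let a < b be real numbers. Let S = {x ∈ ℝ^m : a ≤ x_m ≤ b} be the closed slab. Suppose E : ℝ^m → ℝ is bounded on S, continuous on S, C² on the open slab {x : a < x_m < b} with ΔE = −1 there, and E = 0 at every point of the two hyperplanes {x_m = a} and {x_m = b}. Then E(x) = (1/2)(x_m − a)(b − x_m) for every x ∈ S. (The slab is Dirichlet parabolic, so this explicit function is its unique bounded Dirichlet mean exit time.) -/

import Mathlib

open Filter

/-- The Euclidean Laplacian `Δu(x) = ∑ i, ∂²u/∂xᵢ²(x)`. -/
noncomputable def lap {n : ℕ} (u : EuclideanSpace ℝ (Fin n) → ℝ)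
    (x : EuclideanSpace ℝ (Fin n)) : ℝ :=
  ∑ i : Fin n,
    fderiv ℝ (fun y => fderiv ℝ u y (EuclideanSpace.single i 1)) x (EuclideanSpace.single i 1)

/-- Second-derivative test at a local minimum. -/
lemma second_test {φ : ℝ → ℝ} {L : ℝ} (hmin : IsLocalMin φ 0)
    (hφ : ∀ᶠ t in nhds (0:ℝ), DifferentiableAt ℝ φ t)
    (hL : HasDerivAt (deriv φ) L 0) : 0 ≤ L := by
  by_contra hc
  push_neg at hc
  have h0 : deriv φ 0 = 0 := hmin.deriv_eq_zero
  have hs : Tendsto (slope (deriv φ) 0) (nhdsWithin 0 {(0:ℝ)}ᶜ) (nhds L) :=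
    hasDerivAt_iff_tendsto_slope.mp hL
  have hneg : ∀ᶠ t in nhdsWithin (0:ℝ) {(0:ℝ)}ᶜ, slope (deriv φ) 0 t < 0 :=
    hs.eventually_lt_const hc
  have h1 : ∀ᶠ t in nhds (0:ℝ), t ≠ 0 → slope (deriv φ) 0 t < 0 := by
    rwa [eventually_nhdsWithin_iff] at hneg
  have h2 : ∀ᶠ t in nhds (0:ℝ),
      (DifferentiableAt ℝ φ t ∧ φ 0 ≤ φ t) ∧ (t ≠ 0 → slope (deriv φ) 0 t < 0) :=
    (hφ.and hmin).and h1
  rw [Metric.eventually_nhds_iff] at h2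
  obtain ⟨ε, hε, hball⟩ := h2
  have key : ∀ t : ℝ, 0 < t → t < ε → deriv φ t < 0 := by
    intro t ht htε
    have hb := hball (y := t) (by simp [Real.dist_eq, abs_of_pos ht]; linarith)
    have := hb.2 (ne_of_gt ht)
    have hsl : slope (deriv φ) 0 t = deriv φ t / t := by
      simp [slope_def_field, h0]
    rw [hsl] at this
    rcases div_neg_iff.mp this with h | h
    · linarith [h.2]
    · exact h.1
  have hanti : StrictAntiOn φ (Set.Icc 0 (ε/2)) := by
    apply strictAntiOn_of_deriv_neg (convex_Icc _ _)
    · intro t ht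
      have hd : DifferentiableAt ℝ φ t := by
        refine (hball (y := t) ?_).1.1
        rw [Real.dist_eq, sub_zero, abs_of_nonneg ht.1]
        linarith [ht.2]
      exact hd.continuousAt.continuousWithinAt
    · intro t ht
      rw [interior_Icc] at ht
      exact key t ht.1 (by linarith [ht.2])
  have hlt : φ (ε/2) < φ 0 :=
    hanti (Set.mem_Icc.mpr ⟨le_refl 0, by linarith⟩)
      (Set.mem_Icc.mpr ⟨by linarith, le_refl _⟩) (by linarith)
  have hge : φ 0 ≤ φ (ε/2) :=
    (hball (y := ε/2) (by rw [Real.dist_eq, sub_zero, abs_of_pos (by linarith)]; linarith)).1.2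
  linarith

/-- At an interior local min of a C² function, each pure second directional derivative is ≥ 0. -/
lemma dir_second_nonneg {m : ℕ} {v : EuclideanSpace ℝ (Fin m) → ℝ} {U : Set (EuclideanSpace ℝ (Fin m))}
    (hU : IsOpen U) {p : EuclideanSpace ℝ (Fin m)} (hp : p ∈ U)
    (hv : ContDiffOn ℝ 2 v U) (hmin : IsLocalMin v p) (k : Fin m) :
    0 ≤ fderiv ℝ (fun y => fderiv ℝ v y (EuclideanSpace.single k 1)) p (EuclideanSpace.single k 1) := by
  set e : EuclideanSpace ℝ (Fin m) := EuclideanSpace.single k 1 with he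
  set g : ℝ → EuclideanSpace ℝ (Fin m) := fun t => p + t • e with hg
  have hg0 : g 0 = p := by simp [hg]
  have hgc : Continuous g := by fun_prop
  have hgd : ∀ t : ℝ, HasDerivAt g e t := by
    intro t
    simpa [hg] using ((hasDerivAt_id t).smul_const e).const_add p
  -- v differentiable on U
  have hvd : ∀ y ∈ U, DifferentiableAt ℝ v y := fun y hy =>
    (hv.differentiableOn (by norm_num)).differentiableAt (hU.mem_nhds hy)
  -- φ := v ∘ g
  set φ : ℝ → ℝ := fun t => v (g t) with hφdef
  have hminφ : IsLocalMin φ 0 := by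
    have : IsLocalMin v (g 0) := by rw [hg0]; exact hmin
    exact this.comp_continuous hgc.continuousAt
  have hUg : ∀ᶠ t in nhds (0:ℝ), g t ∈ U :=
    hgc.continuousAt.preimage_mem_nhds (by rw [hg0]; exact hU.mem_nhds hp)
  have hφderiv : ∀ t : ℝ, g t ∈ U → HasDerivAt φ (fderiv ℝ v (g t) e) t := fun t ht =>
    ((hvd _ ht).hasFDerivAt).comp_hasDerivAt t (hgd t)
  have hφdiff : ∀ᶠ t in nhds (0:ℝ), DifferentiableAt ℝ φ t :=
    hUg.mono fun t ht => (hφderiv t ht).differentiableAt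
  -- ψ := y ↦ fderiv v y e is differentiable at p
  have hfd1 : ContDiffOn ℝ 1 (fderiv ℝ v) U := hv.fderiv_of_isOpen hU le_rfl
  have hψd0 : DifferentiableAt ℝ (fderiv ℝ v) p :=
    (hfd1.differentiableOn one_ne_zero).differentiableAt (hU.mem_nhds hp)
  set ψ : EuclideanSpace ℝ (Fin m) → ℝ := fun y => fderiv ℝ v y e with hψdef
  have hψd : DifferentiableAt ℝ ψ p := hψd0.clm_apply (differentiableAt_const e)
  have hd2 : HasDerivAt (fun t => ψ (g t)) (fderiv ℝ ψ p e) 0 := by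
    have hψg : HasFDerivAt ψ (fderiv ℝ ψ p) (g 0) := by rw [hg0]; exact hψd.hasFDerivAt
    exact hψg.comp_hasDerivAt 0 (hgd 0)
  have heq : deriv φ =ᶠ[nhds (0:ℝ)] fun t => ψ (g t) :=
    hUg.mono fun t ht => (hφderiv t ht).deriv
  have hL : HasDerivAt (deriv φ) (fderiv ℝ ψ p e) 0 := by
    rw [Filter.EventuallyEq.hasDerivAt_iff heq]
    exact hd2
  exact second_test hminφ hφdiff hL

/-- A quadratic function in coordinates. -/
def qf {m : ℕ} (α β : Fin m → ℝ) (x : EuclideanSpace ℝ (Fin m)) : ℝ :=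
  ∑ i, (α i * (x i)^2 + β i * (x i))

lemma qf_hasFDerivAt {m : ℕ} (α β : Fin m → ℝ) (x : EuclideanSpace ℝ (Fin m)) :
    HasFDerivAt (qf α β)
      (∑ i, (2 * α i * x i + β i) • (EuclideanSpace.proj i : EuclideanSpace ℝ (Fin m) →L[ℝ] ℝ)) x := by
  apply HasFDerivAt.fun_sum
  intro i _
  have hp : HasFDerivAt (fun y : EuclideanSpace ℝ (Fin m) => y i)
      (EuclideanSpace.proj i : EuclideanSpace ℝ (Fin m) →L[ℝ] ℝ) x :=
    ((EuclideanSpace.proj i : EuclideanSpace ℝ (Fin m) →L[ℝ] ℝ).hasFDerivAt (x := x)).congr_of_eventuallyEq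
      (Filter.Eventually.of_forall fun y => rfl)
  have h1 : HasFDerivAt (fun y : EuclideanSpace ℝ (Fin m) => α i * (y i)^2)
      ((α i * (2 * x i)) • (EuclideanSpace.proj i : EuclideanSpace ℝ (Fin m) →L[ℝ] ℝ)) x := by
    have hsq : HasFDerivAt (fun y : EuclideanSpace ℝ (Fin m) => (y i)^2)
        (x i • (EuclideanSpace.proj i : EuclideanSpace ℝ (Fin m) →L[ℝ] ℝ)
          + x i • (EuclideanSpace.proj i : EuclideanSpace ℝ (Fin m) →L[ℝ] ℝ)) x :=
      (hp.fun_mul hp).congr_of_eventuallyEq (Filter.Eventually.of_forall fun y => by ring)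
    have := hsq.const_mul (α i)
    refine this.congr_fderiv ?_
    ext y
    simp [smul_smul]
    ring
  have h2 : HasFDerivAt (fun y : EuclideanSpace ℝ (Fin m) => β i * (y i))
      ((β i) • (EuclideanSpace.proj i : EuclideanSpace ℝ (Fin m) →L[ℝ] ℝ)) x := hp.const_mul (β i)
  have := h1.fun_add h2
  convert this using 1
  rw [← add_smul]
  ring_nf

lemma qf_fderiv_apply {m : ℕ} (α β : Fin m → ℝ) (y : EuclideanSpace ℝ (Fin m)) (k : Fin m) :
    fderiv ℝ (qf α β) y (EuclideanSpace.single k 1) = 2 * α k * y k + β k := by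
  rw [(qf_hasFDerivAt α β y).fderiv]
  simp [ContinuousLinearMap.sum_apply, PiLp.proj_apply, EuclideanSpace.single_apply]

lemma qf_second {m : ℕ} (α β : Fin m → ℝ) (p : EuclideanSpace ℝ (Fin m)) (k : Fin m) :
    fderiv ℝ (fun y => fderiv ℝ (qf α β) y (EuclideanSpace.single k 1)) p
      (EuclideanSpace.single k 1) = 2 * α k := by
  have hfun : (fun y : EuclideanSpace ℝ (Fin m) => fderiv ℝ (qf α β) y (EuclideanSpace.single k 1))
      = fun y => 2 * α k * y k + β k := by
    funext y; exact qf_fderiv_apply α β y k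
  rw [hfun]
  have hd : HasFDerivAt (fun y : EuclideanSpace ℝ (Fin m) => 2 * α k * y k + β k)
      ((2 * α k) • (EuclideanSpace.proj k : EuclideanSpace ℝ (Fin m) →L[ℝ] ℝ)) p := by
    have hp : HasFDerivAt (fun y : EuclideanSpace ℝ (Fin m) => y k)
        (EuclideanSpace.proj k : EuclideanSpace ℝ (Fin m) →L[ℝ] ℝ) p :=
      ((EuclideanSpace.proj k : EuclideanSpace ℝ (Fin m) →L[ℝ] ℝ).hasFDerivAt (x := p)).congr_of_eventuallyEq
        (Filter.Eventually.of_forall fun y => rfl)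
    exact (hp.const_mul (2 * α k)).add_const (β k)
  rw [hd.fderiv]
  simp [PiLp.proj_apply, EuclideanSpace.single_apply]

/-- Laplacian of `qf α β + c + σ • E` on an open set where `E` is `C²`. -/
lemma lap_combine {m : ℕ} {E : EuclideanSpace ℝ (Fin m) → ℝ} {U : Set (EuclideanSpace ℝ (Fin m))}
    (hU : IsOpen U) (hE : ContDiffOn ℝ 2 E U) {p : EuclideanSpace ℝ (Fin m)} (hp : p ∈ U)
    (α β : Fin m → ℝ) (c σ : ℝ) :
    lap (fun x => qf α β x + c + σ * E x) p = (∑ i, 2 * α i) + σ * lap E p := by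
  have hEd : ∀ y ∈ U, DifferentiableAt ℝ E y := fun y hy =>
    (hE.differentiableOn (by norm_num)).differentiableAt (hU.mem_nhds hy)
  have hfd1 : ContDiffOn ℝ 1 (fderiv ℝ E) U := hE.fderiv_of_isOpen hU le_rfl
  have hψd0 : DifferentiableAt ℝ (fderiv ℝ E) p :=
    (hfd1.differentiableOn one_ne_zero).differentiableAt (hU.mem_nhds hp)
  have key : ∀ k : Fin m,
      fderiv ℝ (fun y => fderiv ℝ (fun x => qf α β x + c + σ * E x) y (EuclideanSpace.single k 1)) p
        (EuclideanSpace.single k 1)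
      = 2 * α k + σ * fderiv ℝ (fun y => fderiv ℝ E y (EuclideanSpace.single k 1)) p
          (EuclideanSpace.single k 1) := by
    intro k
    set e : EuclideanSpace ℝ (Fin m) := EuclideanSpace.single k 1 with he
    -- inner derivative identity on U
    have hinner : ∀ y ∈ U,
        fderiv ℝ (fun x => qf α β x + c + σ * E x) y e
          = fderiv ℝ (qf α β) y e + σ * fderiv ℝ E y e := by
      intro y hy
      have h1 : HasFDerivAt (fun x => qf α β x + c + σ * E x)
          ((∑ i, (2 * α i * y i + β i) • (EuclideanSpace.proj i : EuclideanSpace ℝ (Fin m) →L[ℝ] ℝ))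
            + σ • fderiv ℝ E y) y := by
        exact ((qf_hasFDerivAt α β y).add_const c).add (((hEd y hy).hasFDerivAt).const_smul σ)
      rw [h1.fderiv, (qf_hasFDerivAt α β y).fderiv]
      simp [smul_eq_mul]
    have heq : (fun y => fderiv ℝ (fun x => qf α β x + c + σ * E x) y e)
        =ᶠ[nhds p] fun y => fderiv ℝ (qf α β) y e + σ * fderiv ℝ E y e :=
      (eventually_of_mem (hU.mem_nhds hp) hinner)
    rw [heq.fderiv_eq]
    -- differentiate the sum at p
    have hqd : DifferentiableAt ℝ (fun y : EuclideanSpace ℝ (Fin m) => fderiv ℝ (qf α β) y e) p := by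
      have hfun : (fun y : EuclideanSpace ℝ (Fin m) => fderiv ℝ (qf α β) y e)
          = fun y => 2 * α k * y k + β k := by
        funext y; exact qf_fderiv_apply α β y k
      rw [hfun]
      have hp' : DifferentiableAt ℝ (fun y : EuclideanSpace ℝ (Fin m) => y k) p :=
        ((EuclideanSpace.proj k : EuclideanSpace ℝ (Fin m) →L[ℝ] ℝ).hasFDerivAt
          (x := p)).congr_of_eventuallyEq (Filter.Eventually.of_forall fun y => rfl)
          |>.differentiableAt
      exact (hp'.const_mul (2 * α k)).add_const (β k)
    have hEde : DifferentiableAt ℝ (fun y : EuclideanSpace ℝ (Fin m) => fderiv ℝ E y e) p :=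
      hψd0.clm_apply (differentiableAt_const e)
    rw [fderiv_fun_add hqd (hEde.const_mul σ)]
    rw [fderiv_const_mul hEde σ]
    simp only [ContinuousLinearMap.add_apply, ContinuousLinearMap.coe_smul',
      Pi.smul_apply, smul_eq_mul]
    rw [qf_second α β p k]
  unfold lap
  simp only [key]
  rw [Finset.sum_add_distrib, Finset.mul_sum]

/-- Sum of squares of the coordinates other than `j`. -/
def sq' {m : ℕ} (j : Fin m) (x : EuclideanSpace ℝ (Fin m)) : ℝ :=
  ∑ i, if i = j then 0 else (x i)^2

lemma coord_continuous {m : ℕ} (i : Fin m) :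
    Continuous fun x : EuclideanSpace ℝ (Fin m) => x i := by fun_prop

lemma sq'_continuous {m : ℕ} (j : Fin m) : Continuous (sq' j) := by
  unfold sq'
  refine continuous_finset_sum _ fun i _ => ?_
  by_cases h : i = j <;> simp [h]
  · exact continuous_const
  · exact (coord_continuous i).pow 2

lemma sum_sq_split {m : ℕ} (j : Fin m) (x : EuclideanSpace ℝ (Fin m)) :
    ∑ i, (x i)^2 = sq' j x + (x j)^2 := by
  have key : ∀ i : Fin m, (x i)^2 = (if i = j then 0 else (x i)^2) + (if i = j then (x i)^2 else 0) := by
    intro i; by_cases h : i = j <;> simp [h]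
  calc ∑ i, (x i)^2 = ∑ i, ((if i = j then 0 else (x i)^2) + (if i = j then (x i)^2 else 0)) :=
        Finset.sum_congr rfl fun i _ => key i
    _ = sq' j x + ∑ i, if i = j then (x i)^2 else 0 := Finset.sum_add_distrib
    _ = sq' j x + (x j)^2 := by rw [Finset.sum_ite_eq' Finset.univ j]; simp

lemma min_principle {m : ℕ} (j : Fin m) (a b R : ℝ) (hab : a < b) (hR : 0 < R)
    (v : EuclideanSpace ℝ (Fin m) → ℝ)
    (hcont : ContinuousOn v {x | sq' j x ≤ R^2 ∧ a ≤ x j ∧ x j ≤ b})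
    (hC2 : ContDiffOn ℝ 2 v {x | sq' j x < R^2 ∧ a < x j ∧ x j < b})
    (hlap : ∀ x, sq' j x < R^2 → a < x j → x j < b → lap v x < 0)
    (hbd : ∀ x, sq' j x ≤ R^2 → a ≤ x j → x j ≤ b →
      (sq' j x = R^2 ∨ x j = a ∨ x j = b) → 0 ≤ v x) :
    ∀ x, sq' j x ≤ R^2 → a ≤ x j → x j ≤ b → 0 ≤ v x := by
  set K : Set (EuclideanSpace ℝ (Fin m)) := {x | sq' j x ≤ R^2 ∧ a ≤ x j ∧ x j ≤ b} with hK
  have hKclosed : IsClosed K := by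
    have h1 : IsClosed {x : EuclideanSpace ℝ (Fin m) | sq' j x ≤ R^2} :=
      isClosed_le (sq'_continuous j) continuous_const
    have h2 : IsClosed {x : EuclideanSpace ℝ (Fin m) | a ≤ x j} :=
      isClosed_le continuous_const (coord_continuous j)
    have h3 : IsClosed {x : EuclideanSpace ℝ (Fin m) | x j ≤ b} :=
      isClosed_le (coord_continuous j) continuous_const
    have hKeq : K = {x : EuclideanSpace ℝ (Fin m) | sq' j x ≤ R^2} ∩
        ({x : EuclideanSpace ℝ (Fin m) | a ≤ x j} ∩ {x : EuclideanSpace ℝ (Fin m) | x j ≤ b}) := by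
      ext x; simp [hK, Set.mem_setOf_eq, and_assoc]
    rw [hKeq]
    exact h1.inter (h2.inter h3)
  -- K is bounded, hence compact
  have hKsub : K ⊆ Metric.closedBall 0 (Real.sqrt (R^2 + max (a^2) (b^2))) := by
    intro x hx
    obtain ⟨h1, h2, h3⟩ := hx
    rw [Metric.mem_closedBall, dist_zero_right]
    have hnorm : ‖x‖ = Real.sqrt (∑ i, (x i)^2) := by
      rw [EuclideanSpace.norm_eq]
      congr 1
      apply Finset.sum_congr rfl
      intro i _
      rw [Real.norm_eq_abs, sq_abs]
    rw [hnorm]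
    apply Real.sqrt_le_sqrt
    rw [sum_sq_split j]
    have hxj : (x j)^2 ≤ max (a^2) (b^2) := by
      rcases le_or_gt 0 (x j) with h | h
      · exact le_trans (by nlinarith) (le_max_right _ _)
      · exact le_trans (by nlinarith) (le_max_left _ _)
    linarith
  have hKcompact : IsCompact K :=
    (isCompact_closedBall _ _).of_isClosed_subset hKclosed hKsub
  -- K is nonempty
  have hKne : K.Nonempty := by
    refine ⟨EuclideanSpace.single j a, ?_, ?_, ?_⟩
    · simp only [sq', EuclideanSpace.single_apply]
      have : ∀ i : Fin m, (if i = j then 0 else ((if i = j then a else 0):ℝ)^2) = 0 := by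
        intro i; by_cases h : i = j <;> simp [h]
      rw [Finset.sum_congr rfl fun i _ => this i]
      simp
      positivity
    · simp [EuclideanSpace.single_apply]
    · simp [EuclideanSpace.single_apply]; linarith
  obtain ⟨p, hpK, hpmin⟩ := hKcompact.exists_isMinOn hKne hcont
  intro x hx1 hx2 hx3
  have hvp : 0 ≤ v p := by
    by_cases hb : sq' j p = R^2 ∨ p j = a ∨ p j = b
    · exact hbd p hpK.1 hpK.2.1 hpK.2.2 hb
    · push_neg at hb
      obtain ⟨hb1, hb2, hb3⟩ := hb
      have hp1 : sq' j p < R^2 := lt_of_le_of_ne hpK.1 hb1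
      have hp2 : a < p j := lt_of_le_of_ne hpK.2.1 (Ne.symm hb2)
      have hp3 : p j < b := lt_of_le_of_ne hpK.2.2 hb3
      set U : Set (EuclideanSpace ℝ (Fin m)) := {x | sq' j x < R^2 ∧ a < x j ∧ x j < b} with hUdef
      have hUopen : IsOpen U := by
        have o1 : IsOpen {x : EuclideanSpace ℝ (Fin m) | sq' j x < R^2} :=
          isOpen_lt (sq'_continuous j) continuous_const
        have o2 : IsOpen {x : EuclideanSpace ℝ (Fin m) | a < x j} :=
          isOpen_lt continuous_const (coord_continuous j)
        have o3 : IsOpen {x : EuclideanSpace ℝ (Fin m) | x j < b} :=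
          isOpen_lt (coord_continuous j) continuous_const
        have : U = {x : EuclideanSpace ℝ (Fin m) | sq' j x < R^2} ∩
            ({x : EuclideanSpace ℝ (Fin m) | a < x j} ∩ {x : EuclideanSpace ℝ (Fin m) | x j < b}) := by
          ext x; simp [hUdef, Set.mem_setOf_eq, and_assoc]
        rw [this]
        exact o1.inter (o2.inter o3)
      have hpU : p ∈ U := ⟨hp1, hp2, hp3⟩
      have hUK : U ⊆ K := fun y hy => ⟨le_of_lt hy.1, le_of_lt hy.2.1, le_of_lt hy.2.2⟩
      have hlocal : IsLocalMin v p :=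
        hpmin.isLocalMin (Filter.mem_of_superset (hUopen.mem_nhds hpU) hUK)
      exfalso
      have hsum : 0 ≤ lap v p := by
        unfold lap
        apply Finset.sum_nonneg
        intro k _
        exact dir_second_nonneg hUopen hpU hC2 hlocal k
      exact absurd (hlap p hp1 hp2 hp3) (not_lt.mpr hsum)
  exact le_trans hvp (hpmin ⟨hx1, hx2, hx3⟩)

lemma sq'_nonneg {m : ℕ} (j : Fin m) (x : EuclideanSpace ℝ (Fin m)) : 0 ≤ sq' j x := by
  apply Finset.sum_nonneg
  intro i _
  by_cases h : i = j <;> simp [h]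
  positivity

lemma coord_contDiff {m : ℕ} (i : Fin m) :
    ContDiff ℝ 2 fun x : EuclideanSpace ℝ (Fin m) => x i := by
  have h : (fun x : EuclideanSpace ℝ (Fin m) => x i)
      = ⇑(EuclideanSpace.proj i : EuclideanSpace ℝ (Fin m) →L[ℝ] ℝ) := rfl
  rw [h]
  exact (EuclideanSpace.proj i : EuclideanSpace ℝ (Fin m) →L[ℝ] ℝ).contDiff

lemma qf_contDiff {m : ℕ} (α β : Fin m → ℝ) : ContDiff ℝ 2 (qf α β) := by
  unfold qf
  apply ContDiff.sum
  intro i _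
  exact (contDiff_const.mul ((coord_contDiff i).pow 2)).add (contDiff_const.mul (coord_contDiff i))

lemma qf_value {m : ℕ} (j : Fin m) (κ μ a b : ℝ) (x : EuclideanSpace ℝ (Fin m)) :
    qf (fun i => if i = j then -μ else κ) (fun i => if i = j then μ*(a+b) else 0) x + (-(μ*(a*b)))
      = κ * sq' j x + μ * ((x j - a)*(b - x j)) := by
  unfold qf sq'
  have key : ∀ i : Fin m,
      ((if i = j then -μ else κ) * (x i)^2 + (if i = j then μ*(a+b) else 0) * (x i))
      = κ * (if i = j then 0 else (x i)^2)
        + (if i = j then (-μ*(x j)^2 + μ*(a+b)*(x j)) else 0) := by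
    intro i; by_cases h : i = j
    · subst h; simp
    · simp [h]
  rw [Finset.sum_congr rfl fun i _ => key i, Finset.sum_add_distrib, ← Finset.mul_sum,
    Finset.sum_ite_eq' Finset.univ j]
  simp
  ring

lemma alpha_sum {m : ℕ} (j : Fin m) (κ μ : ℝ) :
    ∑ i : Fin m, 2 * (if i = j then -μ else κ) = 2*((m:ℝ))*κ - 2*κ - 2*μ := by
  have key : ∀ i : Fin m, 2 * (if i = j then -μ else κ)
      = (if i = j then -2*μ - 2*κ else 0) + 2*κ := by
    intro i; by_cases h : i = j <;> simp [h] <;> try ring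
  rw [Finset.sum_congr rfl fun i _ => key i, Finset.sum_add_distrib,
    Finset.sum_ite_eq' Finset.univ j, Finset.sum_const]
  simp [Finset.card_univ]
  ring

/-- The barrier estimate, for one sign `σ = ±1`. -/
lemma slab_bound {m : ℕ} (j : Fin m) (a b C0 : ℝ) (hab : a < b)
    (E : EuclideanSpace ℝ (Fin m) → ℝ)
    (hbd : ∀ x : EuclideanSpace ℝ (Fin m), a ≤ x j → x j ≤ b → |E x| ≤ C0)
    (hcont : ContinuousOn E {x : EuclideanSpace ℝ (Fin m) | a ≤ x j ∧ x j ≤ b})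
    (hC2 : ContDiffOn ℝ 2 E {x : EuclideanSpace ℝ (Fin m) | a < x j ∧ x j < b})
    (hlapE : ∀ x : EuclideanSpace ℝ (Fin m), a < x j → x j < b → lap E x = -1)
    (hzero : ∀ x : EuclideanSpace ℝ (Fin m), x j = a ∨ x j = b → E x = 0)
    (σ R : ℝ) (hσ : σ = 1 ∨ σ = -1) (hR : 0 < R)
    (x : EuclideanSpace ℝ (Fin m)) (hx1 : a ≤ x j) (hx2 : x j ≤ b) (hx3 : sq' j x ≤ R^2) :
    0 ≤ (|C0| + (b-a)^2/8 + 1)/R^2 * sq' j x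
      + ((m:ℝ) * ((|C0| + (b-a)^2/8 + 1)/R^2) - σ/2) * ((x j - a)*(b - x j)) + σ * E x := by
  set C' : ℝ := |C0| + (b-a)^2/8 + 1 with hC'
  have hC'pos : 0 < C' := by positivity
  set κ : ℝ := C'/R^2 with hκ
  have hκpos : 0 < κ := by positivity
  set μ : ℝ := (m:ℝ) * κ - σ/2 with hμ
  set α : Fin m → ℝ := fun i => if i = j then -μ else κ with hα
  set β : Fin m → ℝ := fun i => if i = j then μ*(a+b) else 0 with hβ
  set c : ℝ := -(μ*(a*b)) with hc
  set v : EuclideanSpace ℝ (Fin m) → ℝ := fun y => qf α β y + c + σ * E y with hv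
  have hval : ∀ y : EuclideanSpace ℝ (Fin m),
      v y = κ * sq' j y + μ * ((y j - a)*(b - y j)) + σ * E y := by
    intro y
    rw [hv]
    simp only
    rw [show qf α β y + c + σ * E y = (qf α β y + c) + σ * E y from by ring, qf_value j κ μ a b y]
  have hσsq : σ * σ = 1 := by rcases hσ with h | h <;> rw [h] <;> norm_num
  have hσabs : |σ| = 1 := by rcases hσ with h | h <;> rw [h] <;> norm_num
  -- the three hypotheses of the minimum principle
  have hopen : IsOpen {y : EuclideanSpace ℝ (Fin m) | a < y j ∧ y j < b} := by
    have o2 : IsOpen {y : EuclideanSpace ℝ (Fin m) | a < y j} :=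
      isOpen_lt continuous_const (coord_continuous j)
    have o3 : IsOpen {y : EuclideanSpace ℝ (Fin m) | y j < b} :=
      isOpen_lt (coord_continuous j) continuous_const
    exact o2.inter o3
  have hmain := min_principle j a b R hab hR v ?_ ?_ ?_ ?_
  · have := hmain x hx3 hx1 hx2
    rw [hval x] at this
    exact this
  · -- continuity
    have h1 : Continuous fun y : EuclideanSpace ℝ (Fin m) => qf α β y + c :=
      ((qf_contDiff α β).continuous).add continuous_const
    refine h1.continuousOn.add (continuousOn_const.mul (hcont.mono ?_))
    intro y hy; exact ⟨hy.2.1, hy.2.2⟩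
  · -- C²
    refine (((qf_contDiff α β).add contDiff_const).contDiffOn).add
      (contDiffOn_const.mul (hC2.mono ?_))
    intro y hy; exact ⟨hy.2.1, hy.2.2⟩
  · -- laplacian negative
    intro y hy1 hy2 hy3
    have hyU : y ∈ {y : EuclideanSpace ℝ (Fin m) | a < y j ∧ y j < b} := ⟨hy2, hy3⟩
    have := lap_combine hopen hC2 hyU α β c σ
    have hsum : ∑ i, 2 * α i = 2*((m:ℝ))*κ - 2*κ - 2*μ := alpha_sum j κ μ
    rw [hsum, hlapE y hy2 hy3] at this
    have hlapv : lap v y = -2*κ := by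
      rw [this, hμ]; ring
    rw [hlapv]
    linarith
  · -- boundary nonnegativity
    intro y hy1 hy2 hy3 hy4
    rw [hval y]
    have hg0 : 0 ≤ (y j - a)*(b - y j) := mul_nonneg (by linarith) (by linarith)
    rcases hy4 with h | h
    · -- lateral boundary : sq' = R^2
      have hE : |E y| ≤ C0 := hbd y hy2 hy3
      have hgU : (y j - a)*(b - y j) ≤ (b-a)^2/4 := by nlinarith [sq_nonneg (a + b - 2 * y j)]
      have hκR : κ * R^2 = C' := by
        rw [hκ]; field_simp
      have hσE : -|C0| ≤ σ * E y := by
        have h1 : -|E y| ≤ σ * E y := by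
          rcases hσ with h' | h' <;> rw [h']
          · simpa using neg_abs_le (E y)
          · simp only [neg_one_mul]
            linarith [le_abs_self (E y)]
        have h2 : |E y| ≤ |C0| := le_trans hE (le_abs_self C0)
        linarith
      have hmg : 0 ≤ (m:ℝ) * κ * ((y j - a)*(b - y j)) := by positivity
      have hσg : σ/2 * ((y j - a)*(b - y j)) ≤ (b-a)^2/8 := by
        have : σ/2 * ((y j - a)*(b - y j)) ≤ 1/2 * ((y j - a)*(b - y j)) := by
          rcases hσ with h' | h' <;> rw [h'] <;> nlinarith
        nlinarith
      have hκs : κ * sq' j y = C' := by rw [h]; exact hκR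
      have expand : μ * ((y j - a)*(b - y j))
          = (m:ℝ)*κ*((y j - a)*(b - y j)) - σ/2*((y j - a)*(b - y j)) := by
        rw [hμ]; ring
      rw [expand]
      clear_value C' κ μ
      linarith [hκs, hmg, hσg, hσE, hC'pos]
    · -- top/bottom : E = 0, g = 0
      have hEy : E y = 0 := hzero y h
      have hgy : (y j - a)*(b - y j) = 0 := by
        rcases h with h | h <;> rw [h] <;> ring
      rw [hEy, hgy]
      have : 0 ≤ κ * sq' j y := mul_nonneg hκpos.le (sq'_nonneg j y)
      linarith

/-- The bounded Dirichlet mean exit time of the slab `{x ∈ ℝ^m : a ≤ x_m ≤ b}` is the explicit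
function `(1/2)(x_m - a)(b - x_m)`: any bounded continuous function on the closed slab which is
`C²` with `ΔE = -1` on the open slab and vanishes on the two boundary hyperplanes equals it. -/
theorem slab_mean_exit_time (m : ℕ) (hm : 1 ≤ m) (a b : ℝ) (hab : a < b)
    (j : Fin m) (hj : j = (⟨m - 1, by omega⟩ : Fin m))
    (E : EuclideanSpace ℝ (Fin m) → ℝ)
    (hbd : ∃ C : ℝ, ∀ x ∈ {x : EuclideanSpace ℝ (Fin m) | a ≤ x j ∧ x j ≤ b}, |E x| ≤ C)
    (hcont : ContinuousOn E {x : EuclideanSpace ℝ (Fin m) | a ≤ x j ∧ x j ≤ b})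
    (hC2 : ContDiffOn ℝ 2 E {x : EuclideanSpace ℝ (Fin m) | a < x j ∧ x j < b})
    (hlap : ∀ x : EuclideanSpace ℝ (Fin m), a < x j → x j < b → lap E x = -1)
    (hzero : ∀ x : EuclideanSpace ℝ (Fin m), x j = a ∨ x j = b → E x = 0) :
    ∀ x ∈ {x : EuclideanSpace ℝ (Fin m) | a ≤ x j ∧ x j ≤ b},
      E x = (1 / 2) * (x j - a) * (b - x j) := by
  obtain ⟨C0, hC0⟩ := hbd
  have hbd' : ∀ x : EuclideanSpace ℝ (Fin m), a ≤ x j → x j ≤ b → |E x| ≤ C0 :=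
    fun x h1 h2 => hC0 x ⟨h1, h2⟩
  intro x hx
  obtain ⟨hx1, hx2⟩ := hx
  set C' : ℝ := |C0| + (b-a)^2/8 + 1 with hC'
  set g₀ : ℝ := (x j - a)*(b - x j) with hg₀
  have hg₀0 : 0 ≤ g₀ := mul_nonneg (by linarith) (by linarith)
  set d : ℝ := E x - (1/2) * g₀ with hd
  set A : ℝ := C' * (sq' j x + (m:ℝ) * g₀) with hA
  have hC'pos : 0 < C' := by positivity
  have hA0 : 0 ≤ A := by
    apply mul_nonneg hC'pos.le
    have := sq'_nonneg j x
    positivity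
  clear_value C' g₀ d A
  -- the two-sided bound for every admissible R
  have key : ∀ R : ℝ, 0 < R → sq' j x ≤ R^2 → |d| ≤ A / R^2 := by
    intro R hR hxR
    have h1 := slab_bound j a b C0 hab E hbd' hcont hC2 hlap hzero 1 R (Or.inl rfl) hR x hx1 hx2 hxR
    have h2 := slab_bound j a b C0 hab E hbd' hcont hC2 hlap hzero (-1) R (Or.inr rfl) hR x hx1 hx2 hxR
    rw [← hC', ← hg₀] at h1 h2
    rw [abs_le]
    have hRne : (R:ℝ)^2 ≠ 0 := by positivity
    constructor
    · rw [hd, hA, neg_le, ← sub_nonneg]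
      have expand : C' * (sq' j x + (m:ℝ) * g₀) / R^2 - -(E x - 1/2 * g₀)
          = C'/R^2 * sq' j x + ((m:ℝ) * (C'/R^2) - 1/2) * g₀ + 1 * E x := by
        field_simp
        ring
      rw [expand]
      exact h1
    · rw [hd, hA, ← sub_nonneg]
      have expand : C' * (sq' j x + (m:ℝ) * g₀) / R^2 - (E x - 1/2 * g₀)
          = C'/R^2 * sq' j x + ((m:ℝ) * (C'/R^2) - (-1)/2) * g₀ + (-1) * E x := by
        field_simp
        ring
      rw [expand]
      exact h2
  -- conclude d = 0
  have hdz : d = 0 := by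
    by_contra hne
    have hdpos : 0 < |d| := abs_pos.mpr hne
    have hq2 : 0 ≤ 2*A/|d| := div_nonneg (by linarith) hdpos.le
    set R : ℝ := max (Real.sqrt (sq' j x)) (Real.sqrt (2*A/|d|)) + 1 with hRdef
    clear_value R
    have hs1 : 0 ≤ Real.sqrt (sq' j x) := Real.sqrt_nonneg _
    have hs2 : 0 ≤ Real.sqrt (2*A/|d|) := Real.sqrt_nonneg _
    have hRpos : 0 < R := by
      have : 0 ≤ max (Real.sqrt (sq' j x)) (Real.sqrt (2*A/|d|)) := le_max_of_le_left hs1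
      linarith
    have hR1 : sq' j x ≤ R^2 := by
      have h1 : Real.sqrt (sq' j x) ≤ R := by
        have := le_max_left (Real.sqrt (sq' j x)) (Real.sqrt (2*A/|d|))
        linarith
      calc sq' j x = (Real.sqrt (sq' j x))^2 := (Real.sq_sqrt (sq'_nonneg j x)).symm
        _ ≤ R^2 := pow_le_pow_left₀ hs1 h1 2
    have hR2 : 2*A/|d| ≤ R^2 := by
      have h1 : Real.sqrt (2*A/|d|) ≤ R := by
        have := le_max_right (Real.sqrt (sq' j x)) (Real.sqrt (2*A/|d|))
        linarith
      calc 2*A/|d| = (Real.sqrt (2*A/|d|))^2 := (Real.sq_sqrt hq2).symm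
        _ ≤ R^2 := pow_le_pow_left₀ hs2 h1 2
    have hbound := key R hRpos hR1
    have hR2pos : 0 < R^2 := pow_pos hRpos 2
    have hb1 : |d| * R^2 ≤ A := by
      rw [div_eq_mul_inv] at hbound
      calc |d| * R^2 ≤ (A * (R^2)⁻¹) * R^2 := by nlinarith
        _ = A := by field_simp
    have hb2 : 2*A ≤ |d| * R^2 := by
      rw [div_le_iff₀ hdpos] at hR2
      nlinarith
    nlinarith
  have : E x = (1/2) * g₀ := by
    have := sub_eq_zero.mp (hd ▸ hdz)
    linarith [this]
  rw [this, hg₀]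
  ring
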